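/- Let K be a number field, let c ∈ K, and let P ∈ K be a preperiodic point of the map f_c(z) = z² + c. Then H_K(P) ≤ ((1 + √5)/2)^{[K:ℚ]} · H_K(c)^{1/2}. -/

import Mathlib

open NumberField IsDedekindDomain
open scoped NNReal

/-- The normalized absolute value `‖·‖_v` attached to a finite place `v` of a number field `K`,
with `‖x‖_v = N(𝔭)^(-ord_𝔭 x)` for the maximal ideal `𝔭` corresponding to `v`. -/
noncomputable def finiteAbs {K : Type*} [Field K] [NumberField K]
    (v : HeightOneSpectrum (𝓞 K)) (x : K) : ℝ :=
  WithZeroMulInt.toNNReal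
    (show ((Ideal.absNorm v.asIdeal : ℝ≥0)) ≠ 0 by
      simp only [ne_eq, Nat.cast_eq_zero, Ideal.absNorm_eq_zero_iff]
      exact v.ne_bot)
    (v.valuation K x)

/-- The relative height `H_K(x)` of an element `x` of a number field `K`:
the product over the infinite places `w` of `max (w x) 1 ^ mult w` times the product over
the finite places `v` of `max ‖x‖_v 1`. -/
noncomputable def relHeight {K : Type*} [Field K] [NumberField K] (x : K) : ℝ :=
  (∏ w : InfinitePlace K, max (w x) 1 ^ w.mult) *
    ∏ᶠ v : HeightOneSpectrum (𝓞 K), max (finiteAbs v x) 1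

namespace PrepAux

open Function
open scoped Multiplicative

noncomputable abbrev phi : ℝ := (1 + Real.sqrt 5) / 2

lemma phi_sq : phi ^ 2 = phi + 1 := by
  have h5 : Real.sqrt 5 ^ 2 = 5 := Real.sq_sqrt (by norm_num)
  unfold phi; nlinarith [h5]

lemma one_lt_phi : 1 < phi := by
  have h5 : Real.sqrt 5 ^ 2 = 5 := Real.sq_sqrt (by norm_num)
  have h0 : 0 ≤ Real.sqrt 5 := Real.sqrt_nonneg 5
  have : (2:ℝ) < Real.sqrt 5 := by nlinarith
  unfold phi; linarith

variable {K : Type*} [Field K] [NumberField K]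

lemma one_lt_base (v : HeightOneSpectrum (𝓞 K)) :
    (1:ℝ≥0) < (Ideal.absNorm v.asIdeal : ℝ≥0) := by
  rw [Nat.one_lt_cast]
  rcases Nat.lt_or_ge (Ideal.absNorm v.asIdeal) 2 with h | h
  · interval_cases h' : Ideal.absNorm v.asIdeal
    · exact absurd (Ideal.absNorm_eq_zero_iff.mp h') v.ne_bot
    · exact absurd (Ideal.absNorm_eq_one_iff.mp h') v.isPrime.ne_top
  · omega

lemma finiteAbs_eq (v : HeightOneSpectrum (𝓞 K)) (x : K) :
    finiteAbs v x =
      (WithZeroMulInt.toNNReal (ne_zero_of_lt (one_lt_base v)) (v.valuation K x) : ℝ) := rfl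

lemma finiteAbs_nonneg (v : HeightOneSpectrum (𝓞 K)) (x : K) : 0 ≤ finiteAbs v x :=
  (WithZeroMulInt.toNNReal _ _).coe_nonneg

lemma finiteAbs_le_one {v : HeightOneSpectrum (𝓞 K)} {x : K} (h : v.valuation K x ≤ 1) :
    finiteAbs v x ≤ 1 := by
  rw [finiteAbs_eq]
  exact_mod_cast (WithZeroMulInt.toNNReal_le_one_iff (one_lt_base v)).mpr h

lemma finiteAbs_sq_le {v : HeightOneSpectrum (𝓞 K)} {x y : K}
    (h : (v.valuation K x) ^ 2 ≤ v.valuation K y) : (finiteAbs v x) ^ 2 ≤ finiteAbs v y := by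
  rw [finiteAbs_eq, finiteAbs_eq]
  have mono := (WithZeroMulInt.toNNReal_strictMono (one_lt_base v)).monotone h
  rw [map_pow] at mono
  exact_mod_cast mono

lemma mulSupport_finite (x : K) :
    (Function.mulSupport fun v : HeightOneSpectrum (𝓞 K) => max (finiteAbs v x) 1).Finite := by
  rcases eq_or_ne x 0 with rfl | hx
  · convert Set.finite_empty
    ext v
    simp [Function.mulSupport, finiteAbs_eq]
  · have hfin : {v : HeightOneSpectrum (𝓞 K) | 1 < v.valuation K x}.Finite := by
      exact HeightOneSpectrum.Support.finite (𝓞 K) x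
    refine hfin.subset fun v hv => ?_
    simp only [Function.mem_mulSupport] at hv
    rw [Set.mem_setOf_eq, ← not_le]
    intro hle
    exact hv (max_eq_right (finiteAbs_le_one hle))

lemma finite_escape {v : HeightOneSpectrum (𝓞 K)} {c P : K}
    (hP : ∃ m n : ℕ, m < n ∧ (fun z : K => z ^ 2 + c)^[m] P = (fun z : K => z ^ 2 + c)^[n] P) :
    v.valuation K P ≤ 1 ∨ (v.valuation K P) ^ 2 ≤ v.valuation K c := by
  by_contra hcon
  push_neg at hcon
  obtain ⟨h1, h2⟩ := hcon
  set f : K → K := fun z => z ^ 2 + c with hf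
  set u : ℕ → WithZero (Multiplicative ℤ) := fun k => v.valuation K (f^[k] P) with hu
  have key : ∀ k, 1 < u k ∧ v.valuation K c < (u k) ^ 2 := by
    intro k
    induction k with
    | zero => exact ⟨h1, h2⟩
    | succ k ih =>
      obtain ⟨ih1, ih2⟩ := ih
      have hstep : u (k + 1) = (u k) ^ 2 := by
        have h3 : f^[k+1] P = (f^[k] P) ^ 2 + c := by
          rw [Function.iterate_succ_apply']
        simp only [hu, h3]
        rw [Valuation.map_add_eq_of_lt_left]
        · rw [map_pow]
        · rw [map_pow]; exact ih2
      constructor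
      · rw [hstep]; exact one_lt_pow₀ ih1 (by norm_num)
      · rw [hstep, ← pow_mul]
        exact ih2.trans_le (pow_le_pow_right₀ ih1.le (by norm_num))
  have hmono : StrictMono u := by
    apply strictMono_nat_of_lt_succ
    intro k
    have hstep : u (k + 1) = (u k) ^ 2 := by
      have h3 : f^[k+1] P = (f^[k] P) ^ 2 + c := by
        rw [Function.iterate_succ_apply']
      simp only [hu, h3]
      rw [Valuation.map_add_eq_of_lt_left]
      · rw [map_pow]
      · rw [map_pow]; exact (key k).2
    rw [hstep]
    have h1k := (key k).1
    calc u k = u k * 1 := (mul_one _).symm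
    _ < u k * u k := mul_lt_mul_of_pos_left h1k (zero_lt_one.trans h1k)
    _ = (u k) ^ 2 := (sq _).symm
  obtain ⟨m, n, hmn, heq⟩ := hP
  exact absurd (congrArg (v.valuation K) heq) (hmono hmn).ne

lemma finite_bound {v : HeightOneSpectrum (𝓞 K)} {c P : K}
    (hP : ∃ m n : ℕ, m < n ∧ (fun z : K => z ^ 2 + c)^[m] P = (fun z : K => z ^ 2 + c)^[n] P) :
    (max (finiteAbs v P) 1) ^ 2 ≤ max (finiteAbs v c) 1 := by
  rcases finite_escape hP with h | h
  · rw [max_eq_right (finiteAbs_le_one h)]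
    simpa using le_max_right (finiteAbs v c) 1
  · rcases le_total (finiteAbs v P) 1 with h' | h'
    · rw [max_eq_right h']
      simpa using le_max_right (finiteAbs v c) 1
    · rw [max_eq_left h']
      exact le_trans (finiteAbs_sq_le h) (le_max_left _ _)

lemma arch_escape (w : InfinitePlace K) {c P : K}
    (hP : ∃ m n : ℕ, m < n ∧ (fun z : K => z ^ 2 + c)^[m] P = (fun z : K => z ^ 2 + c)^[n] P) :
    w P ≤ phi * Real.sqrt (max (w c) 1) := by
  set s : ℝ := Real.sqrt (max (w c) 1) with hs
  have hs1 : 1 ≤ s := by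
    have := Real.sqrt_le_sqrt (le_max_right (w c) 1)
    simpa [hs] using this
  have hs0 : 0 < s := lt_of_lt_of_le zero_lt_one hs1
  have hsM : s ^ 2 = max (w c) 1 := Real.sq_sqrt (le_trans zero_le_one (le_max_right _ _))
  by_contra hcon
  push_neg at hcon
  set f : K → K := fun z => z ^ 2 + c with hf
  have step : ∀ x : K, phi * s < w x → w x < w (f x) := by
    intro x hx
    have hphi := one_lt_phi
    have ht1 : 1 < w x := lt_trans (by nlinarith) hx
    have h1 : (w x) ^ 2 ≤ w (f x) + w c := by
      have h2 : w ((x ^ 2 + c) + (-c)) ≤ w (x ^ 2 + c) + w (-c) := w.1.add_le _ _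
      have e3 : w (-c) = w c := w.1.map_neg c
      have e4 : (x ^ 2 + c) + (-c) = x ^ 2 := by ring
      rw [e3, e4, map_pow] at h2
      exact h2
    have hc : w c ≤ s ^ 2 := by rw [hsM]; exact le_max_left _ _
    have hA : 0 < (w x - phi * s) * (w x - 1) :=
      mul_pos (sub_pos.mpr hx) (sub_pos.mpr ht1)
    have hB : 0 ≤ (w x - phi * s) * (phi * s) :=
      mul_nonneg (sub_nonneg.mpr hx.le) (by positivity)
    have hC : 0 ≤ (s - 1) * (phi * s) :=
      mul_nonneg (by linarith) (by positivity)
    have hE : phi ^ 2 * s ^ 2 = (phi + 1) * s ^ 2 := by rw [phi_sq]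
    nlinarith [hA, hB, hC, hE, h1, hc]
  have inv : ∀ k : ℕ, phi * s < w (f^[k] P) := by
    intro k
    induction k with
    | zero => simpa using hcon
    | succ k ih =>
      rw [Function.iterate_succ_apply']
      exact lt_trans ih (step _ ih)
  have hmono : StrictMono fun k => w (f^[k] P) := by
    apply strictMono_nat_of_lt_succ
    intro k
    rw [Function.iterate_succ_apply']
    exact step _ (inv k)
  obtain ⟨m, n, hmn, heq⟩ := hP
  exact absurd (congrArg w heq) (hmono hmn).ne

lemma arch_bound (w : InfinitePlace K) {c P : K}
    (hP : ∃ m n : ℕ, m < n ∧ (fun z : K => z ^ 2 + c)^[m] P = (fun z : K => z ^ 2 + c)^[n] P) :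
    (max (w P) 1) ^ 2 ≤ phi ^ 2 * max (w c) 1 := by
  set s : ℝ := Real.sqrt (max (w c) 1) with hs
  have hs1 : 1 ≤ s := by
    have := Real.sqrt_le_sqrt (le_max_right (w c) 1)
    simpa [hs] using this
  have hsM : s ^ 2 = max (w c) 1 := Real.sq_sqrt (le_trans zero_le_one (le_max_right _ _))
  have h1 : max (w P) 1 ≤ phi * s := by
    apply max_le (arch_escape w hP)
    nlinarith [one_lt_phi]
  calc (max (w P) 1) ^ 2 ≤ (phi * s) ^ 2 := by
        apply pow_le_pow_left₀ (le_trans zero_le_one (le_max_right _ _)) h1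
  _ = phi ^ 2 * s ^ 2 := by ring
  _ = phi ^ 2 * max (w c) 1 := by rw [hsM]

end PrepAux

/-- If `P ∈ K` is preperiodic for `f_c(z) = z² + c`, then
`H_K(P) ≤ ((1 + √5)/2)^[K:ℚ] ⬝ H_K(c)^(1/2)`. -/
theorem preperiodic_relHeight_le {K : Type*} [Field K] [NumberField K] (c P : K)
    (hP : ∃ m n : ℕ, m < n ∧ (fun z : K => z ^ 2 + c)^[m] P = (fun z : K => z ^ 2 + c)^[n] P) :
    relHeight P ≤ ((1 + Real.sqrt 5) / 2) ^ Module.finrank ℚ K * Real.sqrt (relHeight c) := by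
  classical
  open PrepAux in
  set d := Module.finrank ℚ K with hd
  -- finite parts as finite products
  set S : Finset (HeightOneSpectrum (𝓞 K)) :=
    (PrepAux.mulSupport_finite P).toFinset ∪ (PrepAux.mulSupport_finite c).toFinset with hS
  have hBP : (∏ᶠ v : HeightOneSpectrum (𝓞 K), max (finiteAbs v P) 1)
      = ∏ v ∈ S, max (finiteAbs v P) 1 := by
    apply finprod_eq_prod_of_mulSupport_subset
    intro v hv
    simp only [hS, Finset.coe_union, Set.Finite.coe_toFinset, Set.mem_union]
    exact Or.inl hv
  have hBc : (∏ᶠ v : HeightOneSpectrum (𝓞 K), max (finiteAbs v c) 1)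
      = ∏ v ∈ S, max (finiteAbs v c) 1 := by
    apply finprod_eq_prod_of_mulSupport_subset
    intro v hv
    simp only [hS, Finset.coe_union, Set.Finite.coe_toFinset, Set.mem_union]
    exact Or.inr hv
  set AP : ℝ := ∏ w : InfinitePlace K, max (w P) 1 ^ w.mult with hAP
  set Ac : ℝ := ∏ w : InfinitePlace K, max (w c) 1 ^ w.mult with hAc
  set BP : ℝ := ∏ v ∈ S, max (finiteAbs v P) 1 with hBP'
  set Bc : ℝ := ∏ v ∈ S, max (finiteAbs v c) 1 with hBc'
  have hAPnn : (0:ℝ) ≤ AP :=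
    Finset.prod_nonneg fun w _ => pow_nonneg (le_trans zero_le_one (le_max_right _ _)) _
  have hAcnn : (0:ℝ) ≤ Ac :=
    Finset.prod_nonneg fun w _ => pow_nonneg (le_trans zero_le_one (le_max_right _ _)) _
  have hBPnn : (0:ℝ) ≤ BP :=
    Finset.prod_nonneg fun v _ => le_trans zero_le_one (le_max_right _ _)
  have hBcnn : (0:ℝ) ≤ Bc :=
    Finset.prod_nonneg fun v _ => le_trans zero_le_one (le_max_right _ _)
  have hrelP : relHeight P = AP * BP := by rw [relHeight, hBP]
  have hrelc : relHeight c = Ac * Bc := by rw [relHeight, hBc]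
  have hphinn : (0:ℝ) ≤ phi := le_trans zero_le_one one_lt_phi.le
  -- bound on the finite part
  have hB : BP ^ 2 ≤ Bc := by
    rw [hBP', hBc', ← Finset.prod_pow]
    exact Finset.prod_le_prod (fun v _ => by positivity)
      (fun v _ => PrepAux.finite_bound hP)
  -- bound on the archimedean part
  have hA : AP ^ 2 ≤ phi ^ (2 * d) * Ac := by
    rw [hAP, ← Finset.prod_pow]
    have hle : ∀ w : InfinitePlace K, (max (w P) 1 ^ w.mult) ^ 2
        ≤ (phi ^ 2 * max (w c) 1) ^ w.mult := by
      intro w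
      rw [← pow_mul, mul_comm w.mult 2, pow_mul]
      exact pow_le_pow_left₀ (by positivity) (PrepAux.arch_bound w hP) _
    calc ∏ w : InfinitePlace K, (max (w P) 1 ^ w.mult) ^ 2
        ≤ ∏ w : InfinitePlace K, (phi ^ 2 * max (w c) 1) ^ w.mult :=
          Finset.prod_le_prod (fun w _ => by positivity) (fun w _ => hle w)
      _ = (∏ w : InfinitePlace K, (phi ^ 2) ^ w.mult) * Ac := by
          rw [hAc, ← Finset.prod_mul_distrib]
          exact Finset.prod_congr rfl fun w _ => mul_pow _ _ _
      _ = phi ^ (2 * d) * Ac := by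
          rw [Finset.prod_pow_eq_pow_sum, hd, ← NumberField.InfinitePlace.sum_mult_eq,
            ← pow_mul]
  -- combine
  have hsq : (relHeight P) ^ 2 ≤ phi ^ (2 * d) * relHeight c := by
    have h1 : (relHeight P) ^ 2 = AP ^ 2 * BP ^ 2 := by rw [hrelP]; ring
    have h2 : phi ^ (2 * d) * relHeight c = (phi ^ (2 * d) * Ac) * Bc := by
      rw [hrelc]; ring
    rw [h1, h2]
    exact mul_le_mul hA hB (by positivity) (by positivity)
  have h0P : 0 ≤ relHeight P := by rw [hrelP]; exact mul_nonneg hAPnn hBPnn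
  calc relHeight P = Real.sqrt ((relHeight P) ^ 2) := (Real.sqrt_sq h0P).symm
  _ ≤ Real.sqrt (phi ^ (2 * d) * relHeight c) := Real.sqrt_le_sqrt hsq
  _ = Real.sqrt ((phi ^ d) ^ 2 * relHeight c) := by rw [← pow_mul, mul_comm d 2]
  _ = phi ^ d * Real.sqrt (relHeight c) := by
      rw [Real.sqrt_mul (sq_nonneg _), Real.sqrt_sq (by positivity)]
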